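/- Let F be an endofunctor on Set and L a lax F-lifting. Then for every relation R : X ⇸ Y and all functions f : X' → X and g : Y' → Y, one has L (gr(f) ; R ; (gr(g))°) = gr(F f) ; (L R) ; (gr(F g))°. -/

import Mathlib

universe u v

open CategoryTheory

namespace Rel

/-- The inverse relation (as in the older Mathlib's `Rel.inv`). -/
def inv {α β : Type*} (R : Rel α β) : Rel β α := flip R

/-- Relational composition (as in the older Mathlib's `Rel.comp`). -/
def comp {α β γ : Type*} (r : Rel α β) (s : Rel β γ) : Rel α γ := fun x z => ∃ y, r x y ∧ s y z

end Rel

/-- The graph of a function, as a relation. -/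
def gr {X Y : Type u} (f : X → Y) : Rel X Y := fun x y => f x = y

/-- A lax lifting of an endofunctor `F` on `Set` to relations: monotone, laxly
functorial, and laxly extending graphs and converse graphs. -/
structure LaxLifting (F : Type u ⥤ Type u) : Type (u + 1) where
  map : ∀ {X Y : Type u}, Rel X Y → Rel (F.obj X) (F.obj Y)
  mono : ∀ {X Y : Type u} {R S : Rel X Y}, R ≤ S → map R ≤ map S
  laxComp : ∀ {X Y Z : Type u} (R : Rel X Y) (S : Rel Y Z),
    (map R).comp (map S) ≤ map (R.comp S)
  graph_le : ∀ {X Y : Type u} (f : X → Y), gr ⇑(F.map (TypeCat.ofHom f)) ≤ map (gr f)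
  graphInv_le : ∀ {X Y : Type u} (f : X → Y), (gr ⇑(F.map (TypeCat.ofHom f))).inv ≤ map (gr f).inv

/-- Pointwise order on lax liftings. -/
def LiftLE {F : Type u ⥤ Type u} (L L' : LaxLifting F) : Prop :=
  ∀ (X Y : Type u) (R : Rel X Y), L.map R ≤ L'.map R
/-- A lax lifting strictly preserves cospans of graphs around a relation. -/
theorem lifting_cospan (F : Type u ⥤ Type u) (L : LaxLifting F)
    (X Y X' Y' : Type u) (R : Rel X Y) (f : X' → X) (g : Y' → Y) :
    L.map ((gr f).comp (R.comp (gr g).inv)) =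
      (gr ⇑(F.map (TypeCat.ofHom f))).comp ((L.map R).comp (gr ⇑(F.map (TypeCat.ofHom g))).inv) := by
  apply le_antisymm
  · intro a b hab
    refine ⟨F.map (TypeCat.ofHom f) a, rfl, F.map (TypeCat.ofHom g) b, ?_, rfl⟩
    have h1 : (gr ⇑(F.map (TypeCat.ofHom f))).inv (F.map (TypeCat.ofHom f) a) a := rfl
    have h1' := L.graphInv_le f _ _ h1
    have h2 : gr ⇑(F.map (TypeCat.ofHom g)) b (F.map (TypeCat.ofHom g) b) := rfl
    have h2' := L.graph_le g _ _ h2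
    have hmid := L.laxComp ((gr f).comp (R.comp (gr g).inv)) (gr g)
      a (F.map (TypeCat.ofHom g) b) ⟨b, hab, h2'⟩
    have hbig := L.laxComp ((gr f).inv)
      (((gr f).comp (R.comp (gr g).inv)).comp (gr g)) (F.map (TypeCat.ofHom f) a) (F.map (TypeCat.ofHom g) b)
      ⟨a, h1', hmid⟩
    refine L.mono ?_ _ _ hbig
    rintro x y ⟨x', hx', z, ⟨x₂, hx₂, y', hy', hgz⟩, hzy⟩
    -- hx' : f x' = x, hx₂ : f x' = x₂, hy' : R x₂ y', hgz : g z = y', hzy : g z = y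
    have hx : x = x₂ := hx'.symm.trans hx₂
    have hy : y' = y := hgz.symm.trans hzy
    rw [hx, ← hy]; exact hy'
  · rintro a b ⟨a1, ha1, b1, hR, hb1⟩
    have h1 := L.graph_le f a a1 ha1
    have h2 := L.graphInv_le g b1 b hb1
    have hmid := L.laxComp R ((gr g).inv) a1 b ⟨b1, hR, h2⟩
    exact L.laxComp (gr f) (R.comp (gr g).inv) a b ⟨a1, h1, hmid⟩
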